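/- Let v : [0,T] → [0,∞) be continuous with v(T') ≤ v(0) + d ∫_0^{T'} max{1, v(t)^{4−α/2}} dt for all T' ∈ [0,T], where d > 0 and α ∈ (−1/2,1). Then for all t ≤ T^{(α)} := (1/(d(6−α))) min{1, v(0)^{−(6−α)/2}}, one has v(t) ≤ 4^{1/(6−α)} max{1, v(0)}. -/

import Mathlib

open MeasureTheory

/-- Nonlinear Grönwall lemma with exponent `4 − α/2`: if
`v(T') ≤ v(0) + d∫₀^{T'} max{1, v^(4−α/2)}`, then
`v(t) ≤ 4^(1/(6−α)) max{1, v(0)}` for `t ≤ (1/(d(6−α))) min{1, v(0)^(−(6−α)/2)}`. -/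
theorem stmt11 (T d α : ℝ) (hT : 0 < T) (hd : 0 < d)
    (hα : α ∈ Set.Ioo (-(1:ℝ)/2) 1) (v : ℝ → ℝ)
    (hcont : ContinuousOn v (Set.Icc 0 T))
    (hnn : ∀ t ∈ Set.Icc 0 T, 0 ≤ v t)
    (hineq : ∀ T' ∈ Set.Icc 0 T,
      v T' ≤ v 0 + d * ∫ t in (0:ℝ)..T', max 1 ((v t) ^ (4 - α / 2))) :
    ∀ t ∈ Set.Icc 0 T,
      t ≤ (1 / (d * (6 - α))) * min 1 ((v 0) ^ (-(6 - α) / 2)) →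
      v t ≤ (4 : ℝ) ^ (1 / (6 - α)) * max 1 (v 0) := by
  obtain ⟨hα1, hα2⟩ := hα
  intro t ht htle
  obtain ⟨ht0, htT⟩ := ht
  set p : ℝ := 4 - α / 2 with hp
  set m : ℝ := max 1 (v 0) with hm
  have hs6 : (5:ℝ) < 6 - α := by linarith
  have hs6' : (0:ℝ) < 6 - α := by linarith
  have hp3 : (3:ℝ) < p := by rw [hp]; linarith
  have hp0 : (0:ℝ) < p := by linarith
  have h1p : 1 - p < 0 := by linarith
  have hm1 : (1:ℝ) ≤ m := le_max_left _ _
  have hm0 : (0:ℝ) < m := lt_of_lt_of_le one_pos hm1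
  have hv0m : v 0 ≤ m := le_max_right _ _
  -- the constant is at least 1
  have hc1 : (1:ℝ) ≤ (4:ℝ) ^ (1 / (6 - α)) :=
    Real.one_le_rpow (by norm_num) (by positivity)
  -- trivial case t = 0
  rcases eq_or_lt_of_le ht0 with h0 | h0t
  · rw [← h0]
    calc v 0 ≤ m := hv0m
    _ = 1 * m := (one_mul m).symm
    _ ≤ (4:ℝ) ^ (1 / (6 - α)) * m := mul_le_mul_of_nonneg_right hc1 (le_of_lt hm0)
  -- key bound on t : d * (p-1) * t ≤ m^(1-p) / 2
  have hmin : min 1 ((v 0) ^ (-(6 - α) / 2)) ≤ m ^ (1 - p) := by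
    have h1p' : (1 - p) = -(6 - α) / 2 := by rw [hp]; ring
    rcases le_or_gt (v 0) 1 with hv1 | hv1
    · have : m = 1 := max_eq_left hv1
      rw [this, Real.one_rpow]
      exact min_le_left _ _
    · have : m = v 0 := max_eq_right (le_of_lt hv1)
      rw [this, h1p']
      exact min_le_right _ _
  have hkey : d * (p - 1) * t ≤ m ^ (1 - p) / 2 := by
    have hp1 : p - 1 = (6 - α) / 2 := by rw [hp]; ring
    have h1 : t ≤ (1 / (d * (6 - α))) * (m ^ (1 - p)) :=
      le_trans htle (mul_le_mul_of_nonneg_left hmin (by positivity))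
    calc d * (p - 1) * t ≤ d * (p - 1) * ((1 / (d * (6 - α))) * (m ^ (1 - p))) := by
          refine mul_le_mul_of_nonneg_left h1 (by rw [hp1]; positivity)
    _ = m ^ (1 - p) / 2 := by rw [hp1]; field_simp
  -- the integrand
  set F : ℝ → ℝ := fun s => max 1 ((v s) ^ p) with hF
  have hFcont : ContinuousOn F (Set.Icc 0 T) :=
    (continuous_const.max continuous_id).comp_continuousOn
      (hcont.rpow_const (fun x _ => Or.inr (le_of_lt hp0)))
  have hF1 : ∀ s, 1 ≤ F s := fun s => le_max_left _ _
  have hFint : ∀ x ∈ Set.Icc (0:ℝ) T, IntervalIntegrable F volume 0 x := by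
    intro x hx
    apply ContinuousOn.intervalIntegrable
    apply hFcont.mono
    rw [Set.uIcc_of_le hx.1]
    exact Set.Icc_subset_Icc le_rfl hx.2
  -- the dominating function
  set G : ℝ → ℝ := fun x => m + d * ∫ s in (0:ℝ)..x, F s with hG
  have hG1 : ∀ x ∈ Set.Icc (0:ℝ) T, 1 ≤ G x := by
    intro x hx
    have h1 : 0 ≤ ∫ s in (0:ℝ)..x, F s :=
      intervalIntegral.integral_nonneg hx.1 (fun s _ => le_trans zero_le_one (hF1 s))
    have h2 : 0 ≤ d * ∫ s in (0:ℝ)..x, F s := by positivity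
    simp only [hG]; linarith
  have hGpos : ∀ x ∈ Set.Icc (0:ℝ) T, 0 < G x := fun x hx =>
    lt_of_lt_of_le one_pos (hG1 x hx)
  have hvG : ∀ x ∈ Set.Icc (0:ℝ) T, v x ≤ G x := by
    intro x hx
    calc v x ≤ v 0 + d * ∫ s in (0:ℝ)..x, max 1 ((v s) ^ (4 - α / 2)) := hineq x hx
    _ ≤ G x := by simp only [hG]; exact add_le_add_left hv0m _
  -- F s ≤ (G s)^p
  have hFG : ∀ s ∈ Set.Icc (0:ℝ) T, F s ≤ (G s) ^ p := by
    intro s hs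
    have h1 : (1:ℝ) ≤ (G s) ^ p := Real.one_le_rpow (hG1 s hs) (le_of_lt hp0)
    have h2 : (v s) ^ p ≤ (G s) ^ p :=
      Real.rpow_le_rpow (hnn s hs) (hvG s hs) (le_of_lt hp0)
    exact max_le h1 h2
  -- the comparison function ψ
  set ψ : ℝ → ℝ := fun x => (G x) ^ (1 - p) - (1 - p) * d * x with hψ
  have hIsub : Set.Icc (0:ℝ) t ⊆ Set.Icc 0 T := Set.Icc_subset_Icc le_rfl htT
  have hGcont : ContinuousOn G (Set.Icc 0 t) := by
    apply continuousOn_const.add (continuousOn_const.mul _)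
    have h := intervalIntegral.continuousOn_primitive_interval
      (f := F) (μ := volume) (a := (0:ℝ)) (b := t) ?_
    · rwa [Set.uIcc_of_le (le_of_lt h0t)] at h
    · rw [Set.uIcc_of_le (le_of_lt h0t)]
      exact (hFcont.mono hIsub).integrableOn_compact isCompact_Icc
  have hψcont : ContinuousOn ψ (Set.Icc 0 t) := by
    apply ContinuousOn.sub
    · exact hGcont.rpow_const (fun x hx => Or.inl (ne_of_gt (hGpos x (hIsub hx))))
    · exact (continuousOn_const.mul continuousOn_id)
  -- derivative of ψ on the interior
  have hderiv : ∀ s ∈ Set.Ioo (0:ℝ) t, HasDerivAt ψ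
      ((d * F s) * (1 - p) * (G s) ^ (1 - p - 1) - (1 - p) * d) s := by
    intro s hs
    have hsT : s ∈ Set.Ioo (0:ℝ) T := ⟨hs.1, lt_of_lt_of_le hs.2 htT⟩
    have hsT' : s ∈ Set.Icc (0:ℝ) T := ⟨le_of_lt hsT.1, le_of_lt hsT.2⟩
    have hnhds : Set.Icc (0:ℝ) T ∈ nhds s := Icc_mem_nhds hsT.1 hsT.2
    have hFca : ContinuousAt F s := hFcont.continuousAt hnhds
    have hFmeas : StronglyMeasurableAtFilter F (nhds s) :=
      ContinuousOn.stronglyMeasurableAtFilter isOpen_Ioo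
        (hFcont.mono Set.Ioo_subset_Icc_self) s hsT
    have hint : HasDerivAt (fun x => ∫ u in (0:ℝ)..x, F u) (F s) s :=
      intervalIntegral.integral_hasDerivAt_right (hFint s hsT') hFmeas hFca
    have hGd : HasDerivAt G (d * F s) s := by
      exact (hint.const_mul d).const_add m
    have hGr : HasDerivAt (fun x => (G x) ^ (1 - p))
        ((d * F s) * (1 - p) * (G s) ^ (1 - p - 1)) s :=
      hGd.rpow_const (Or.inl (ne_of_gt (hGpos s hsT')))
    have hlin : HasDerivAt (fun x : ℝ => (1 - p) * d * x) ((1 - p) * d) s := by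
      simpa using (hasDerivAt_id s).const_mul ((1 - p) * d)
    exact hGr.sub hlin
  -- ψ is monotone on [0, t]
  have hmono : MonotoneOn ψ (Set.Icc 0 t) := by
    apply monotoneOn_of_deriv_nonneg (convex_Icc 0 t) hψcont
    · intro s hs
      rw [interior_Icc] at hs
      exact ((hderiv s hs).differentiableAt).differentiableWithinAt
    · intro s hs
      rw [interior_Icc] at hs
      rw [(hderiv s hs).deriv]
      have hsT' : s ∈ Set.Icc (0:ℝ) T := ⟨le_of_lt hs.1, le_trans (le_of_lt hs.2) htT⟩
      have hGs : 0 < G s := hGpos s hsT'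
      have hA : 0 < (G s) ^ (1 - p - 1) := Real.rpow_pos_of_pos hGs _
      have hAG : (G s) ^ (1 - p - 1) * (G s) ^ p = (G s) ^ (1 - p - 1 + p) :=
        (Real.rpow_add hGs _ _).symm
      have h0 : (1:ℝ) - p - 1 + p = 0 := by ring
      have hprod1 : (G s) ^ (1 - p - 1) * F s ≤ 1 := by
        calc (G s) ^ (1 - p - 1) * F s ≤ (G s) ^ (1 - p - 1) * (G s) ^ p :=
              mul_le_mul_of_nonneg_left (hFG s hsT') (le_of_lt hA)
        _ = 1 := by rw [hAG, h0, Real.rpow_zero]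
      nlinarith [hprod1, mul_nonneg (mul_nonneg (by linarith : (0:ℝ) ≤ p - 1) hd.le)
        (by linarith [hprod1] : (0:ℝ) ≤ 1 - G s ^ (1 - p - 1) * F s)]
  -- conclude: evaluate the monotonicity at 0 and t
  have hmem0 : (0:ℝ) ∈ Set.Icc (0:ℝ) t := ⟨le_rfl, le_of_lt h0t⟩
  have hmemt : t ∈ Set.Icc (0:ℝ) t := ⟨le_of_lt h0t, le_rfl⟩
  have hψ0 : ψ 0 = m ^ (1 - p) := by
    simp [hψ, hG, intervalIntegral.integral_same]
  have hmono0t : ψ 0 ≤ ψ t := hmono hmem0 hmemt (le_of_lt h0t)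
  have hGt1 : 1 ≤ G t := hG1 t ⟨ht0, htT⟩
  have hGt0 : 0 < G t := lt_of_lt_of_le one_pos hGt1
  have hlow : m ^ (1 - p) / 2 ≤ (G t) ^ (1 - p) := by
    have h1 : m ^ (1 - p) + (1 - p) * d * t ≤ (G t) ^ (1 - p) := by
      have := hmono0t
      rw [hψ0] at this
      simp only [hψ] at this
      linarith
    have h2 : (1 - p) * d * t = -(d * (p - 1) * t) := by ring
    rw [h2, ← sub_eq_add_neg] at h1
    have e2 : m ^ (1 - p) - m ^ (1 - p) / 2 ≤ m ^ (1 - p) - d * (p - 1) * t :=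
      sub_le_sub_left hkey _
    have e3 : m ^ (1 - p) / 2 = m ^ (1 - p) - m ^ (1 - p) / 2 := by ring
    rw [e3]
    exact le_trans e2 h1
  have ha0 : (0:ℝ) < m ^ (1 - p) / 2 := by
    have := Real.rpow_pos_of_pos hm0 (1 - p); positivity
  -- raise to the power (1-p)⁻¹ (order reversing)
  have hraise : (G t) ≤ (m ^ (1 - p) / 2) ^ (1 - p)⁻¹ := by
    have h := Real.rpow_le_rpow_of_nonpos ha0 hlow (le_of_lt (inv_neg''.mpr h1p))
    rwa [Real.rpow_rpow_inv (le_of_lt hGt0) (ne_of_lt h1p)] at h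
  -- compute the right-hand side
  have hrhs : (m ^ (1 - p) / 2) ^ (1 - p)⁻¹ = (4:ℝ) ^ (1 / (6 - α)) * m := by
    have h6 : α - 6 ≠ 0 := by linarith
    have h2 : ((4:ℝ)) = (2:ℝ) ^ (2:ℝ) := by
      rw [show ((2:ℝ):ℝ) = ((2:ℕ):ℝ) by norm_num, Real.rpow_natCast]; norm_num
    have h4 : (4:ℝ) ^ (1 / (6 - α)) = (2:ℝ) ^ (2 * (1 / (6 - α))) := by
      rw [h2, ← Real.rpow_mul (by norm_num : (0:ℝ) ≤ 2)]
    have h6' : (-6:ℝ) + α ≠ 0 := by intro h; linarith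
    have hexp : (1 - p)⁻¹ = -(2 * (1 / (6 - α))) := by
      rw [hp]; rw [show (1:ℝ) - (4 - α / 2) = (-6 + α)/2 by ring]
      rw [show -(2 * (1 / (6 - α))) = 2 / (-6 + α) by field_simp; ring]
      rw [inv_div]
    rw [Real.div_rpow (le_of_lt (Real.rpow_pos_of_pos hm0 _)) (by norm_num),
      Real.rpow_rpow_inv (le_of_lt hm0) (ne_of_lt h1p), hexp,
      Real.rpow_neg (by norm_num : (0:ℝ) ≤ 2), h4, div_eq_mul_inv, inv_inv]
    ring
  calc v t ≤ G t := hvG t ⟨ht0, htT⟩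
  _ ≤ (m ^ (1 - p) / 2) ^ (1 - p)⁻¹ := hraise
  _ = (4:ℝ) ^ (1 / (6 - α)) * m := hrhs
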